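/- Let X be a Banach space, T ∈ L(X), and suppose A ⊆ B_X satisfies that the closed convex hull of A equals B_X, and B ⊆ B_{X*} satisfies that the weak* closed convex hull of B equals B_{X*}. Then v(T) = inf over δ > 0 of sup{ |x*(Tx)| : x ∈ A, x* ∈ B, Re x*(x) > 1 − δ }. -/

import Mathlib

open Metric Set



open Filter Topology

theorem ekeland_aux {E : Type*} [MetricSpace E] [CompleteSpace E]
    (F : E → ℝ) (hFc : Continuous F) (hF0 : ∀ z, 0 ≤ F z)
    (x₀ : E) (lam : ℝ) (hlam : 0 < lam) :
    ∃ y, F y + lam * dist y x₀ ≤ F x₀ ∧ ∀ z, F y ≤ F z + lam * dist z y := by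
  classical
  set S : E → Set E := fun x => {z | F z + lam * dist z x ≤ F x} with hS
  have hself : ∀ x, x ∈ S x := by intro x; simp [hS]
  have htrans : ∀ {x w z}, z ∈ S w → w ∈ S x → z ∈ S x := by
    intro x w z hzw hwx
    simp only [hS, Set.mem_setOf_eq] at *
    have := dist_triangle z w x
    nlinarith [dist_nonneg (x := z) (y := w)]
  have hstep : ∀ (n : ℕ) (x : E), ∃ x', x' ∈ S x ∧ ∀ z ∈ S x, F x' ≤ F z + (1/2)^n := by
    intro n x
    have hne : (F '' S x).Nonempty := ⟨F x, x, hself x, rfl⟩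
    have hbd : BddBelow (F '' S x) := ⟨0, by rintro r ⟨z, _, rfl⟩; exact hF0 z⟩
    obtain ⟨r, ⟨x', hx', rfl⟩, hr⟩ := Real.lt_sInf_add_pos hne (by positivity :
      (0:ℝ) < (1/2)^n)
    refine ⟨x', hx', fun z hz => ?_⟩
    have := csInf_le hbd ⟨z, hz, rfl⟩
    linarith
  choose step hstep1 hstep2 using hstep
  let u : ℕ → E := fun n => Nat.rec x₀ (fun n x => step n x) n
  have hu0 : u 0 = x₀ := rfl
  have husucc : ∀ n, u (n + 1) = step n (u n) := fun n => rfl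
  have h1 : ∀ n, u (n+1) ∈ S (u n) := fun n => by rw [husucc]; exact hstep1 n (u n)
  have h2 : ∀ n, ∀ z ∈ S (u n), F (u (n+1)) ≤ F z + (1/2)^n := fun n => by
    rw [husucc]; exact hstep2 n (u n)
  have hchain : ∀ n m, n ≤ m → u m ∈ S (u n) := by
    intro n m hnm
    induction m, hnm using Nat.le_induction with
    | base => exact hself _
    | succ m hnm ih => exact htrans (h1 m) ih
  have hdist : ∀ n, dist (u n) (u (n+1)) ≤ (F (u n) - F (u (n+1))) / lam := by
    intro n
    have := h1 n
    simp only [hS, Set.mem_setOf_eq] at this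
    rw [dist_comm, le_div_iff₀ hlam]
    linarith
  have hFanti : ∀ n m, n ≤ m → F (u m) ≤ F (u n) := by
    intro n m hnm
    have := hchain n m hnm
    simp only [hS, Set.mem_setOf_eq] at this
    nlinarith [dist_nonneg (x := u m) (y := u n)]
  have hsum : Summable fun n => dist (u n) (u (n+1)) := by
    apply summable_of_sum_range_le (c := F x₀ / lam) (fun n => dist_nonneg)
    intro n
    calc ∑ i ∈ Finset.range n, dist (u i) (u (i+1))
        ≤ ∑ i ∈ Finset.range n, (F (u i) - F (u (i+1))) / lam :=
          Finset.sum_le_sum fun i _ => hdist i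
      _ = (F (u 0) - F (u n)) / lam := by
          rw [← Finset.sum_div]
          congr 1
          exact Finset.sum_range_sub' (fun i => F (u i)) n
      _ ≤ F x₀ / lam := by
          rw [hu0]
          have h0 := hF0 (u n)
          gcongr
          linarith
  obtain ⟨y, hy⟩ := cauchySeq_tendsto_of_complete (cauchySeq_of_summable_dist hsum)
  have hySn : ∀ n, y ∈ S (u n) := by
    intro n
    have hclosed : IsClosed (S (u n)) :=
      isClosed_le (by fun_prop) continuous_const
    exact hclosed.mem_of_tendsto hy (eventually_atTop.2 ⟨n, fun m hm => hchain n m hm⟩)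
  have hFy : ∀ n, F y ≤ F (u n) := by
    intro n
    have := hySn n
    simp only [hS, Set.mem_setOf_eq] at this
    nlinarith [dist_nonneg (x := y) (y := u n)]
  constructor
  · refine ⟨?_, ?_⟩
    · have := hySn 0
      simpa [hS, hu0] using this
    · intro z
      by_cases hz : F z + lam * dist z y ≤ F y
      · have hzS : ∀ n, z ∈ S (u n) := fun n => htrans hz (hySn n)
        have key : ∀ n : ℕ, F y ≤ F z + (1/2)^n := by
          intro n
          have := h2 n z (hzS n)
          have := hFy (n+1)
          linarith
        have hle : F y ≤ F z := by
          refine le_of_forall_pos_le_add fun ε hε => ?_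
          obtain ⟨n, hn⟩ := exists_pow_lt_of_lt_one hε (by norm_num : (1:ℝ)/2 < 1)
          exact (key n).trans (by linarith)
        nlinarith [dist_nonneg (x := z) (y := y), hlam.le]
      · push_neg at hz
        linarith


theorem sandwich_aux {E : Type*} [NormedAddCommGroup E] [NormedSpace ℝ E]
    (p q : E → ℝ) (hpc : Continuous p)
    (hp : ∀ u v : E, ∀ a b : ℝ, 0 ≤ a → 0 ≤ b → a + b = 1 →
      p (a • u + b • v) ≤ a * p u + b * p v)
    (hq : ∀ u v : E, ∀ a b : ℝ, 0 ≤ a → 0 ≤ b → a + b = 1 →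
      a * q u + b * q v ≤ q (a • u + b • v))
    (hqp : ∀ u, q u ≤ p u) (hp0 : p 0 = 0) (hq0 : q 0 = 0) :
    ∃ h : E →L[ℝ] ℝ, (∀ u, q u ≤ h u) ∧ (∀ u, h u ≤ p u) := by
  set s : Set (E × ℝ) := {z | p z.1 < z.2} with hs_def
  set t : Set (E × ℝ) := {z | z.2 ≤ q z.1} with ht_def
  have hsconv : Convex ℝ s := by
    rintro ⟨u, r⟩ hu ⟨v, r'⟩ hv a b ha hb hab
    simp only [hs_def, Set.mem_setOf_eq, Prod.smul_mk, Prod.mk_add_mk, smul_eq_mul] at *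
    have h1 := hp u v a b ha hb hab
    rcases eq_or_lt_of_le ha with rfl' | ha'
    · have hb1 : b = 1 := by linarith
      simp only [← rfl', hb1] at *
      simpa using hv
    rcases eq_or_lt_of_le hb with rfl' | hb'
    · have ha1 : a = 1 := by linarith
      simp only [← rfl', ha1] at *
      simpa using hu
    nlinarith
  have hsopen : IsOpen s := isOpen_lt (hpc.comp continuous_fst) continuous_snd
  have htconv : Convex ℝ t := by
    rintro ⟨u, r⟩ hu ⟨v, r'⟩ hv a b ha hb hab
    simp only [ht_def, Set.mem_setOf_eq, Prod.smul_mk, Prod.mk_add_mk, smul_eq_mul] at *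
    have h1 := hq u v a b ha hb hab
    nlinarith [mul_le_mul_of_nonneg_left hu ha, mul_le_mul_of_nonneg_left hv hb]
  have hdisj : Disjoint s t := by
    rw [Set.disjoint_left]
    rintro ⟨u, r⟩ hu hv
    simp only [hs_def, ht_def, Set.mem_setOf_eq] at *
    have := hqp u
    linarith
  obtain ⟨Φ, c, hΦs, hΦt⟩ := geometric_hahn_banach_open hsconv hsopen htconv hdisj
  set α : ℝ := Φ (0, 1) with hα_def
  have hdecomp : ∀ (u : E) (r : ℝ), Φ (u, r) = Φ (u, 0) + r * α := by
    intro u r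
    have : (u, r) = (u, (0:ℝ)) + r • ((0:E), (1:ℝ)) := by
      simp [Prod.ext_iff]
    rw [this, map_add, map_smul, smul_eq_mul, hα_def]
  have hαc : α < c := by
    have : ((0:E), (1:ℝ)) ∈ s := by simp [hs_def, hp0]
    simpa [hα_def] using hΦs _ this
  have hc0 : c ≤ Φ (0, 0) := hΦt _ (by simp [ht_def, hq0])
  have hΦ00 : Φ ((0:E), (0:ℝ)) = 0 := by rw [Prod.mk_zero_zero]; exact map_zero Φ
  have hcle : c ≤ 0 := le_of_le_of_eq hc0 hΦ00
  have hαneg : α < 0 := lt_of_lt_of_le hαc hcle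
  have hup : ∀ u : E, Φ (u, 0) + p u * α ≤ c := by
    intro u
    by_contra hcon
    push_neg at hcon
    set d := Φ (u, 0) + p u * α with hd
    have hε : 0 < (d - c) / (-α) := by
      apply div_pos (by linarith) (by linarith)
    have hmem : (u, p u + (d - c) / (-α)) ∈ s := by
      simp only [hs_def, Set.mem_setOf_eq]
      linarith
    have hkey := hΦs _ hmem
    rw [hdecomp] at hkey
    have hne : α ≠ 0 := ne_of_lt hαneg
    have heq : (p u + (d - c) / (-α)) * α = p u * α - (d - c) := by
      have h1 : (d - c) / (-α) * α = -(d - c) := by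
        calc (d - c) / (-α) * α = -((d - c) / (-α) * (-α)) := by ring
        _ = -(d - c) := by rw [div_mul_cancel₀ _ (by simpa using hne : -α ≠ 0)]
      rw [add_mul, h1]
      ring
    rw [heq] at hkey
    linarith
  have hdown : ∀ u : E, c ≤ Φ (u, 0) + q u * α := by
    intro u
    have := hΦt (u, q u) (by simp [ht_def])
    rwa [hdecomp] at this
  have hc_eq : c = 0 := by
    have h1 := hup 0
    have h2 := hdown 0
    rw [hΦ00] at h1 h2
    rw [hp0] at h1
    rw [hq0] at h2
    linarith
  refine ⟨(-α)⁻¹ • (Φ.comp (ContinuousLinearMap.inl ℝ E ℝ)), fun u => ?_, fun u => ?_⟩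
  all_goals
    have hd := hdown u
    have hu := hup u
    rw [hc_eq] at hd hu
    have hβ : (0:ℝ) < -α := by linarith
    simp only [ContinuousLinearMap.smul_apply, ContinuousLinearMap.coe_comp',
      Function.comp_apply, ContinuousLinearMap.inl_apply, smul_eq_mul]
  · rw [inv_mul_eq_div, le_div_iff₀ hβ]
    nlinarith [hd]
  · rw [inv_mul_eq_div, div_le_iff₀ hβ]
    nlinarith [hu]


open RCLike

section helpers
variable {𝕜 : Type*} [RCLike 𝕜]

theorem exists_unit_mul_eq_norm (w : 𝕜) : ∃ θ : 𝕜, ‖θ‖ = 1 ∧ θ * w = (‖w‖ : 𝕜) := by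
  by_cases hw : w = 0
  · exact ⟨1, norm_one, by simp [hw]⟩
  · refine ⟨(‖w‖ : 𝕜) / w, ?_, div_mul_cancel₀ _ hw⟩
    rw [norm_div, norm_ofReal, abs_norm, div_self (norm_ne_zero_iff.2 hw)]

variable {X : Type*} [NormedAddCommGroup X] [NormedSpace 𝕜 X]
  [NormedSpace ℝ X] [IsScalarTower ℝ 𝕜 X]

theorem re_extend_apply (h : X →L[ℝ] ℝ) (z : X) :
    re ((StrongDual.extendRCLike h z : 𝕜)) = h z := by
  rw [ContinuousLinearMap.extendTo𝕜'_apply]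
  simp [RCLike.I_mul_re]

end helpers

set_option maxHeartbeats 1000000 in
theorem bpb {𝕜 X : Type*} [RCLike 𝕜] [NormedAddCommGroup X] [NormedSpace 𝕜 X]
    [CompleteSpace X] [NormedSpace ℝ X] [IsScalarTower ℝ 𝕜 X]
    (f : X →L[𝕜] 𝕜) (x₀ : X) (hf : ‖f‖ ≤ 1) (hx : ‖x₀‖ ≤ 1)
    (δ lam : ℝ) (hδ : 0 < δ) (hlam : 0 < lam)
    (hre : 1 - δ ≤ re (f x₀)) (hsmall : δ + δ / lam < 1) :
    ∃ (x : X) (g : X →L[𝕜] 𝕜), ‖x‖ = 1 ∧ ‖g‖ = 1 ∧ g x = 1 ∧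
      ‖x - x₀‖ ≤ δ + 2 * (δ / lam) ∧ ‖g - f‖ ≤ lam := by
  have hrebound : ∀ z : X, re (f z) ≤ ‖z‖ := by
    intro z
    calc re (f z) ≤ ‖f z‖ := re_le_norm _
    _ ≤ ‖f‖ * ‖z‖ := f.le_opNorm z
    _ ≤ 1 * ‖z‖ := by gcongr
    _ = ‖z‖ := one_mul _
  set F : X → ℝ := fun z => ‖z‖ - re (f z) with hF_def
  have hFc : Continuous F := by
    apply Continuous.sub continuous_norm
    exact RCLike.continuous_re.comp f.continuous
  have hF0 : ∀ z, 0 ≤ F z := fun z => by simp [hF_def, hrebound z]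
  obtain ⟨y, hy1, hy2⟩ := ekeland_aux F hFc hF0 x₀ lam hlam
  rw [dist_eq_norm] at hy1
  have hFx₀ : F x₀ ≤ δ := by simp only [hF_def]; linarith
  have hdist : ‖y - x₀‖ ≤ δ / lam := by
    have h0 := hF0 y
    rw [le_div_iff₀ hlam]
    nlinarith
  have hx₀lb : 1 - δ ≤ ‖x₀‖ := le_trans hre (hrebound x₀)
  have hylb : 1 - δ - δ / lam ≤ ‖y‖ := by
    have := norm_sub_norm_le y x₀
    have h2 := abs_norm_sub_norm_le y x₀
    rw [abs_le] at h2
    linarith [h2.1]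
  have hyub : ‖y‖ ≤ 1 + δ / lam := by
    have h2 := abs_norm_sub_norm_le y x₀
    rw [abs_le] at h2
    linarith [h2.2]
  have hypos : 0 < ‖y‖ := by linarith [div_pos hδ hlam]
  -- sandwich
  set p : X → ℝ := fun u => ‖y + u‖ - ‖y‖ with hp_def
  set q : X → ℝ := fun u => re (f u) - lam * ‖u‖ with hq_def
  have hlin : ∀ (a : ℝ) (u v : X), re (f (a • u + v)) = a * re (f u) + re (f v) := by
    intro a u v
    rw [map_add, f.map_smul_of_tower, map_add, smul_re]
  obtain ⟨h, hqh, hhp⟩ : ∃ h : X →L[ℝ] ℝ, (∀ u, q u ≤ h u) ∧ (∀ u, h u ≤ p u) := by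
    apply sandwich_aux
    · fun_prop
    · intro u v a b ha hb hab
      simp only [hp_def]
      have key : y + (a • u + b • v) = a • (y + u) + b • (y + v) := by
        rw [smul_add, smul_add,
          show a • y + a • u + (b • y + b • v) = (a + b) • y + (a • u + b • v) from by
            rw [add_smul]; abel, hab, one_smul]
      rw [key]
      calc ‖a • (y + u) + b • (y + v)‖ - ‖y‖
          ≤ a * ‖y + u‖ + b * ‖y + v‖ - ‖y‖ := by
            have := norm_add_le (a • (y + u)) (b • (y + v))
            rw [norm_smul, norm_smul, Real.norm_eq_abs, Real.norm_eq_abs,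
              abs_of_nonneg ha, abs_of_nonneg hb] at this
            linarith
        _ = a * (‖y + u‖ - ‖y‖) + b * (‖y + v‖ - ‖y‖) := by
            rw [show a * (‖y + u‖ - ‖y‖) + b * (‖y + v‖ - ‖y‖)
              = a * ‖y + u‖ + b * ‖y + v‖ - (a + b) * ‖y‖ by ring, hab, one_mul]
    · intro u v a b ha hb hab
      simp only [hq_def]
      have h1 : re (f (a • u + b • v)) = a * re (f u) + b * re (f v) := by
        rw [hlin, f.map_smul_of_tower, smul_re]
      have h2 : ‖a • u + b • v‖ ≤ a * ‖u‖ + b * ‖v‖ := by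
        have := norm_add_le (a • u) (b • v)
        rw [norm_smul, norm_smul, Real.norm_eq_abs, Real.norm_eq_abs,
          abs_of_nonneg ha, abs_of_nonneg hb] at this
        linarith
      nlinarith [hlam.le]
    · intro u
      simp only [hp_def, hq_def]
      have := hy2 (y + u)
      rw [dist_eq_norm, show y + u - y = u by abel] at this
      simp only [hF_def] at this
      have hfy : re (f (y + u)) = re (f y) + re (f u) := by rw [map_add, map_add]
      linarith
    · simp [hp_def]
    · simp [hq_def]
  have hhy : h y = ‖y‖ := by
    have h1 : h y ≤ ‖y + y‖ - ‖y‖ := hhp y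
    have h2 : h (-y) ≤ ‖y + -y‖ - ‖y‖ := hhp (-y)
    rw [show y + y = (2:ℝ) • y by rw [two_smul], norm_smul] at h1
    simp only [Real.norm_ofNat] at h1
    rw [map_neg, add_neg_cancel, norm_zero] at h2
    have : h y ≤ 2 * ‖y‖ - ‖y‖ := h1
    linarith
  have habs : ∀ u, |h u| ≤ ‖u‖ := by
    intro u
    rw [abs_le]
    constructor
    · have := hhp (-u)
      rw [map_neg] at this
      simp only [hp_def] at this
      have h2 : ‖y + -u‖ - ‖y‖ ≤ ‖u‖ := by
        have := norm_add_le y (-u)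
        rw [norm_neg] at this
        linarith
      linarith
    · have := hhp u
      simp only [hp_def] at this
      have h2 : ‖y + u‖ - ‖y‖ ≤ ‖u‖ := by have := norm_add_le y u; linarith
      linarith
  have hhf : ∀ u, |re (f u) - h u| ≤ lam * ‖u‖ := by
    intro u
    rw [abs_le]
    constructor
    · have := hqh (-u)
      simp only [hq_def] at this
      simp only [map_neg, norm_neg] at this
      linarith
    · have := hqh u
      simp only [hq_def] at this
      linarith
  set x : X := ‖y‖⁻¹ • y with hx_def
  have hxnorm : ‖x‖ = 1 := by
    rw [hx_def, norm_smul, Real.norm_eq_abs, abs_of_nonneg (inv_nonneg.2 hypos.le),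
      inv_mul_cancel₀ (ne_of_gt hypos)]
  have hhx : h x = 1 := by
    rw [hx_def, map_smul, smul_eq_mul, hhy, inv_mul_cancel₀ (ne_of_gt hypos)]
  set g : X →L[𝕜] 𝕜 := StrongDual.extendRCLike h with hg_def
  have hgre : ∀ z, re (g z) = h z := fun z => re_extend_apply h z
  have hgnorm : ‖g‖ = 1 := by
    rw [hg_def, ContinuousLinearMap.norm_extendTo𝕜']
    apply le_antisymm
    · exact h.opNorm_le_bound zero_le_one fun u => by
        rw [Real.norm_eq_abs, one_mul]; exact habs u
    · calc (1:ℝ) = ‖h x‖ := by rw [hhx]; simp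
      _ ≤ ‖h‖ * ‖x‖ := h.le_opNorm x
      _ = ‖h‖ := by rw [hxnorm, mul_one]
  have hgx : g x = 1 := by
    have hre1 : re (g x) = 1 := by rw [hgre, hhx]
    have hnorm1 : ‖g x‖ ≤ 1 := by
      calc ‖g x‖ ≤ ‖g‖ * ‖x‖ := g.le_opNorm x
      _ = 1 := by rw [hgnorm, hxnorm, mul_one]
    have hsq : ‖g x‖ ^ 2 = re (g x) * re (g x) + im (g x) * im (g x) := norm_sq_eq_def
    have h1 : ‖g x‖ ^ 2 ≤ 1 := pow_le_one₀ (norm_nonneg _) hnorm1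
    rw [hre1] at hsq
    have h2 : im (g x) * im (g x) ≤ 0 := by linarith
    have him : im (g x) = 0 := mul_self_eq_zero.1 (le_antisymm h2 (mul_self_nonneg _))
    apply RCLike.ext
    · rw [hre1, one_re]
    · rw [him, one_im]
  have hxdist : ‖x - x₀‖ ≤ δ + 2 * (δ / lam) := by
    have h1 : ‖x - y‖ = |1 - ‖y‖| := by
      rw [hx_def, show ‖y‖⁻¹ • y - y = (‖y‖⁻¹ - 1) • y by rw [sub_smul, one_smul],
        norm_smul, Real.norm_eq_abs]
      rw [show |‖y‖⁻¹ - 1| * ‖y‖ = |(‖y‖⁻¹ - 1) * ‖y‖| by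
        rw [abs_mul, abs_of_nonneg hypos.le]]
      congr 1
      field_simp
    have h2 : |1 - ‖y‖| ≤ δ + δ / lam := by
      rw [abs_le]; constructor <;> linarith
    calc ‖x - x₀‖ ≤ ‖x - y‖ + ‖y - x₀‖ := norm_sub_le_norm_sub_add_norm_sub x y x₀
    _ ≤ δ + 2 * (δ / lam) := by rw [h1]; linarith
  have hgf : ‖g - f‖ ≤ lam := by
    apply ContinuousLinearMap.opNorm_le_bound _ hlam.le
    intro z
    obtain ⟨θ, hθ, hθw⟩ := exists_unit_mul_eq_norm ((g - f) z)
    have key : ‖(g - f) z‖ = re ((g - f) (θ • z)) := by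
      rw [map_smul, smul_eq_mul, hθw, ofReal_re]
    rw [key]
    have : re ((g - f) (θ • z)) = h (θ • z) - re (f (θ • z)) := by
      rw [ContinuousLinearMap.sub_apply, map_sub, hgre]
    rw [this]
    have := hhf (θ • z)
    rw [abs_le] at this
    calc h (θ • z) - re (f (θ • z)) ≤ lam * ‖θ • z‖ := by linarith [this.1]
    _ = lam * ‖z‖ := by rw [norm_smul, hθ, one_mul]
  exact ⟨x, g, hxnorm, hgnorm, hgx, hxdist, hgf⟩


/-- The numerical radius of a bounded linear operator `T` on a normed space `X` over `𝕜`: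
`v(T) = sup { ‖x*(Tx)‖ : x ∈ S_X, x* ∈ S_{X*}, x*(x) = 1 }`. -/
noncomputable def numRadius (𝕜 : Type*) [RCLike 𝕜] {X : Type*} [NormedAddCommGroup X]
    [NormedSpace 𝕜 X] (T : X →L[𝕜] X) : ℝ :=
  sSup {r : ℝ | ∃ (x : X) (f : X →L[𝕜] 𝕜), ‖x‖ = 1 ∧ ‖f‖ = 1 ∧ f x = 1 ∧ r = ‖f (T x)‖}

/-- The numerical index of a normed space: `n(X) = inf { v(T) : T ∈ L(X), ‖T‖ = 1 }`. -/
noncomputable def numIndex (𝕜 : Type*) [RCLike 𝕜] (X : Type*) [NormedAddCommGroup X]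
    [NormedSpace 𝕜 X] : ℝ :=
  sInf {r : ℝ | ∃ T : X →L[𝕜] X, ‖T‖ = 1 ∧ r = numRadius 𝕜 T}

/-- `v_δ(T)` computed with points taken in `A ⊆ B_X` and functionals in `B ⊆ B_{X*}`. -/
noncomputable def numRadiusDeltaOn (𝕜 : Type*) [RCLike 𝕜] {X : Type*} [NormedAddCommGroup X]
    [NormedSpace 𝕜 X] (T : X →L[𝕜] X) (A : Set X) (B : Set (X →L[𝕜] 𝕜)) (δ : ℝ) : ℝ :=
  sSup {r : ℝ | ∃ x ∈ A, ∃ f ∈ B, 1 - δ < RCLike.re (f x) ∧ r = ‖f (T x)‖}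

/-- `Z` (together with the bounded bilinear map `t`) is the projective tensor product
`X ⊗̂_π Y`: it is complete, elementary tensors have norm `‖x‖‖y‖`, and the closed unit
ball of `Z` is the closed convex hull of `B_X ⊗ B_Y`. -/
structure IsProjectiveTensorProduct (𝕜 : Type*) [RCLike 𝕜] {X Y Z : Type*}
    [NormedAddCommGroup X] [NormedSpace 𝕜 X] [NormedAddCommGroup Y] [NormedSpace 𝕜 Y]
    [NormedAddCommGroup Z] [NormedSpace 𝕜 Z] [NormedSpace ℝ Z] [IsScalarTower ℝ 𝕜 Z]
    (t : X →L[𝕜] Y →L[𝕜] Z) : Prop where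
  complete : CompleteSpace Z
  norm_tmul : ∀ x y, ‖t x y‖ = ‖x‖ * ‖y‖
  ball_eq : closedBall (0 : Z) 1 = closure (convexHull ℝ
      {z : Z | ∃ x ∈ closedBall (0 : X) 1, ∃ y ∈ closedBall (0 : Y) 1, z = t x y})

/-- `Z` (together with the bounded bilinear map `t`) is the injective tensor product
`X ⊗̂_ε Y`: it is complete, the span of elementary tensors is dense, and on that span
the norm is the injective tensor norm. -/
structure IsInjectiveTensorProduct (𝕜 : Type*) [RCLike 𝕜] {X Y Z : Type*}
    [NormedAddCommGroup X] [NormedSpace 𝕜 X] [NormedAddCommGroup Y] [NormedSpace 𝕜 Y]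
    [NormedAddCommGroup Z] [NormedSpace 𝕜 Z] (t : X →L[𝕜] Y →L[𝕜] Z) : Prop where
  complete : CompleteSpace Z
  dense_span : Dense (Submodule.span 𝕜 {z : Z | ∃ x y, z = t x y} : Set Z)
  norm_sum : ∀ (n : ℕ) (x : Fin n → X) (y : Fin n → Y),
    ‖∑ i, t (x i) (y i)‖ = sSup {r : ℝ | ∃ (f : X →L[𝕜] 𝕜) (g : Y →L[𝕜] 𝕜),
      ‖f‖ ≤ 1 ∧ ‖g‖ ≤ 1 ∧ r = ‖∑ i, f (x i) * g (y i)‖}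

/-- A slice of a bounded set `A`: `{a ∈ A : Re f(a) > sup Re f(A) - δ}`. -/
def sliceOf (𝕜 : Type*) [RCLike 𝕜] {X : Type*} [NormedAddCommGroup X] [NormedSpace 𝕜 X]
    (A : Set X) (f : X →L[𝕜] 𝕜) (δ : ℝ) : Set X :=
  {a ∈ A | sSup {r : ℝ | ∃ b ∈ A, r = RCLike.re (f b)} - δ < RCLike.re (f a)}

/-- A set `A` is slicely countably determined (SCD) if there is a countable determining
family of slices of `A`: any `B ⊆ A` meeting every slice of the family has
closed convex hull containing `A`. -/
def IsSCD (𝕜 : Type*) [RCLike 𝕜] {X : Type*} [NormedAddCommGroup X] [NormedSpace 𝕜 X]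
    [NormedSpace ℝ X] [IsScalarTower ℝ 𝕜 X] (A : Set X) : Prop :=
  ∃ V : ℕ → Set X, (∀ n, ∃ (f : X →L[𝕜] 𝕜) (δ : ℝ), 0 < δ ∧ V n = sliceOf 𝕜 A f δ) ∧
    ∀ B ⊆ A, (∀ n, (B ∩ V n).Nonempty) → A ⊆ closure (convexHull ℝ B)

/-- The Daugavet property: `‖Id + T‖ = 1 + ‖T‖` for every rank-one operator `T`. -/
def DaugavetProperty (𝕜 : Type*) [RCLike 𝕜] (X : Type*) [NormedAddCommGroup X]
    [NormedSpace 𝕜 X] : Prop :=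
  ∀ T : X →L[𝕜] X, (∃ (f : X →L[𝕜] 𝕜) (x₀ : X), ∀ x, T x = f x • x₀) →
    ‖ContinuousLinearMap.id 𝕜 X + T‖ = 1 + ‖T‖
section RadLemmas
open RCLike
variable {𝕜 X : Type*} [RCLike 𝕜] [NormedAddCommGroup X] [NormedSpace 𝕜 X]

theorem numRadius_nonneg (T : X →L[𝕜] X) : 0 ≤ numRadius 𝕜 T :=
  Real.sSup_nonneg (by rintro r ⟨x, f, _, _, _, rfl⟩; positivity)

theorem numRadius_bddAbove (T : X →L[𝕜] X) :
    BddAbove {r : ℝ | ∃ (x : X) (f : X →L[𝕜] 𝕜), ‖x‖ = 1 ∧ ‖f‖ = 1 ∧ f x = 1 ∧ r = ‖f (T x)‖} := by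
  refine ⟨‖T‖, ?_⟩
  rintro r ⟨x, f, hx, hf, hfx, rfl⟩
  calc ‖f (T x)‖ ≤ ‖f‖ * ‖T x‖ := f.le_opNorm _
  _ ≤ 1 * (‖T‖ * ‖x‖) := by rw [hf]; gcongr; exact T.le_opNorm x
  _ = ‖T‖ := by rw [hx]; ring

theorem numRadiusDeltaOn_nonneg (T : X →L[𝕜] X) (A : Set X) (B : Set (X →L[𝕜] 𝕜)) (δ : ℝ) :
    0 ≤ numRadiusDeltaOn 𝕜 T A B δ :=
  Real.sSup_nonneg (by rintro r ⟨x, hx, f, hf, h1, rfl⟩; positivity)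

theorem lemB {𝕜 X : Type*} [RCLike 𝕜] [NormedAddCommGroup X]
    [NormedSpace 𝕜 X] [CompleteSpace X] [NormedSpace ℝ X] [IsScalarTower ℝ 𝕜 X]
    (T : X →L[𝕜] X) (A : Set X) (B : Set (X →L[𝕜] 𝕜))
    (hA : A ⊆ Metric.closedBall 0 1) (hB : B ⊆ Metric.closedBall 0 1)
    (δ : ℝ) (hδ : 0 < δ) (hδ4 : δ < 1/4) :
    numRadiusDeltaOn 𝕜 T A B δ ≤ numRadius 𝕜 T + 5 * Real.sqrt δ * ‖T‖ := by
  set lam : ℝ := Real.sqrt δ with hlam_def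
  have hlam : 0 < lam := Real.sqrt_pos.2 hδ
  have hlam2 : lam < 1/2 := by
    have h1 : Real.sqrt δ < Real.sqrt (1/4) := Real.sqrt_lt_sqrt hδ.le hδ4
    rwa [show (1/4 : ℝ) = (1/2)^2 by norm_num, Real.sqrt_sq (by norm_num : (0:ℝ) ≤ 1/2)] at h1
  have hlamsq : lam * lam = δ := Real.mul_self_sqrt hδ.le
  have hdivlam : δ / lam = lam := Real.div_sqrt
  apply Real.sSup_le
  · rintro r ⟨x₀, hx₀A, f, hfB, hslice, rfl⟩
    have hx₀ : ‖x₀‖ ≤ 1 := by simpa [Metric.mem_closedBall, dist_zero_right] using hA hx₀A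
    have hf : ‖f‖ ≤ 1 := by simpa [Metric.mem_closedBall, dist_zero_right] using hB hfB
    have hsmall : δ + δ / lam < 1 := by rw [hdivlam]; nlinarith
    obtain ⟨x, g, hxn, hgn, hgx, hxd, hgd⟩ :=
      bpb f x₀ hf hx₀ δ lam hδ hlam hslice.le hsmall
    have hmem : ‖g (T x)‖ ≤ numRadius 𝕜 T :=
      le_csSup (numRadius_bddAbove T) ⟨x, g, hxn, hgn, hgx, rfl⟩
    have hdecomp : f (T x₀) = g (T x) + ((f - g) (T x₀) + g (T (x₀ - x))) := by
      rw [map_sub, ContinuousLinearMap.sub_apply, map_sub]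
      abel
    have h1 : ‖(f - g) (T x₀)‖ ≤ lam * ‖T‖ := by
      calc ‖(f - g) (T x₀)‖ ≤ ‖f - g‖ * ‖T x₀‖ := (f - g).le_opNorm _
      _ ≤ lam * (‖T‖ * 1) := by
          have hfg : ‖f - g‖ ≤ lam := by rw [norm_sub_rev]; exact hgd
          gcongr
          calc ‖T x₀‖ ≤ ‖T‖ * ‖x₀‖ := T.le_opNorm _
          _ ≤ ‖T‖ * 1 := by gcongr
      _ = lam * ‖T‖ := by ring
    have h2 : ‖g (T (x₀ - x))‖ ≤ (δ + 2 * lam) * ‖T‖ := by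
      calc ‖g (T (x₀ - x))‖ ≤ ‖g‖ * ‖T (x₀ - x)‖ := g.le_opNorm _
      _ ≤ 1 * (‖T‖ * ‖x₀ - x‖) := by rw [hgn]; gcongr; exact T.le_opNorm _
      _ ≤ 1 * (‖T‖ * (δ + 2 * (δ / lam))) := by
          gcongr
          rw [norm_sub_rev]
          exact hxd
      _ = (δ + 2 * lam) * ‖T‖ := by rw [hdivlam]; ring
    calc ‖f (T x₀)‖ ≤ ‖g (T x)‖ + (‖(f - g) (T x₀)‖ + ‖g (T (x₀ - x))‖) := by
          rw [hdecomp]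
          exact (norm_add_le _ _).trans (by gcongr; exact norm_add_le _ _)
    _ ≤ numRadius 𝕜 T + (lam * ‖T‖ + (δ + 2 * lam) * ‖T‖) := by gcongr
    _ ≤ numRadius 𝕜 T + 5 * lam * ‖T‖ := by
          nlinarith [norm_nonneg T,
            mul_nonneg (by nlinarith : (0:ℝ) ≤ 2 * lam - δ) (norm_nonneg T)]
  · have := numRadius_nonneg T
    positivity

end RadLemmas

section LemA
open RCLike

theorem numRadiusDeltaOn_bddAbove {𝕜 X : Type*} [RCLike 𝕜] [NormedAddCommGroup X]
    [NormedSpace 𝕜 X] (T : X →L[𝕜] X) (A : Set X) (B : Set (X →L[𝕜] 𝕜))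
    (hA : A ⊆ Metric.closedBall 0 1) (hB : B ⊆ Metric.closedBall 0 1) (δ : ℝ) :
    BddAbove {r : ℝ | ∃ x ∈ A, ∃ f ∈ B, 1 - δ < RCLike.re (f x) ∧ r = ‖f (T x)‖} := by
  refine ⟨‖T‖, ?_⟩
  rintro r ⟨x, hx, f, hf, _, rfl⟩
  have hx1 : ‖x‖ ≤ 1 := by simpa [Metric.mem_closedBall, dist_zero_right] using hA hx
  have hf1 : ‖f‖ ≤ 1 := by simpa [Metric.mem_closedBall, dist_zero_right] using hB hf
  calc ‖f (T x)‖ ≤ ‖f‖ * ‖T x‖ := f.le_opNorm _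
  _ ≤ 1 * (‖T‖ * 1) := by
      gcongr
      calc ‖T x‖ ≤ ‖T‖ * ‖x‖ := T.le_opNorm _
      _ ≤ ‖T‖ * 1 := by gcongr
  _ = ‖T‖ := by ring

set_option maxHeartbeats 1000000 in
theorem lemA {𝕜 X : Type*} [RCLike 𝕜] [NormedAddCommGroup X]
    [NormedSpace 𝕜 X] [CompleteSpace X] [NormedSpace ℝ X] [IsScalarTower ℝ 𝕜 X]
    [NormedSpace ℝ (X →L[𝕜] 𝕜)] [IsScalarTower ℝ 𝕜 (X →L[𝕜] 𝕜)]
    (T : X →L[𝕜] X) (A : Set X) (B : Set (X →L[𝕜] 𝕜))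
    (hA : A ⊆ Metric.closedBall 0 1)
    (hAhull : closure (convexHull ℝ A) = Metric.closedBall 0 1)
    (hB : B ⊆ Metric.closedBall 0 1)
    (hBhull : closure (⇑StrongDual.toWeakDual '' convexHull ℝ B) =
      ⇑StrongDual.toWeakDual '' Metric.closedBall 0 1)
    (x : X) (f : X →L[𝕜] 𝕜) (hx : ‖x‖ = 1) (hf : ‖f‖ = 1) (hfx : f x = 1)
    (δ : ℝ) (hδ : 0 < δ) :
    ‖f (T x)‖ ≤ numRadiusDeltaOn 𝕜 T A B δ := by
  classical
  set S := numRadiusDeltaOn 𝕜 T A B δ with hS_def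
  have hS0 : 0 ≤ S := numRadiusDeltaOn_nonneg T A B δ
  apply le_of_forall_pos_le_add
  intro ε hε
  set η : ℝ := ε / (2 * ‖T‖ / δ + 1 + ‖T‖) with hη_def
  have hden : 0 < 2 * ‖T‖ / δ + 1 + ‖T‖ := by positivity
  have hη : 0 < η := div_pos hε hden
  have hηε : η * (2 * ‖T‖ / δ + 1 + ‖T‖) = ε := div_mul_cancel₀ ε hden.ne'
  have hsmulX : ∀ (r : ℝ) (v : X), r • v = (r : 𝕜) • v := by
    intro r v
    exact RCLike.real_smul_eq_coe_smul (K := 𝕜) r v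
  have hsmulD : ∀ (r : ℝ) (b : X →L[𝕜] 𝕜) (v : X), (r • b) v = (r : 𝕜) * b v := by
    intro r b v
    rw [RCLike.real_smul_eq_coe_smul (K := 𝕜) r b, ContinuousLinearMap.smul_apply, smul_eq_mul]
  -- step 1: approximate x by a convex combination of points of A
  have hxball : x ∈ closure (convexHull ℝ A) := by
    rw [hAhull, Metric.mem_closedBall, dist_zero_right, hx]
  obtain ⟨z, hzhull, hxz⟩ := Metric.mem_closure_iff.1 hxball η hη
  rw [convexHull_eq] at hzhull
  obtain ⟨ι, s, w, a, hw0, hw1, haA, hzc⟩ := hzhull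
  have hzsum : z = ∑ i ∈ s, w i • a i := by
    rw [← hzc, Finset.centerMass_eq_of_sum_1 _ _ hw1]
  have hxz' : ‖x - z‖ < η := by rwa [← dist_eq_norm]
  have ha1 : ∀ i ∈ s, ‖a i‖ ≤ 1 := fun i hi => by
    simpa [Metric.mem_closedBall, dist_zero_right] using hA (haA i hi)
  -- step 2: approximate f weak-star on finitely many points
  set W : Finset X := s.image a ∪ s.image (fun i => T (a i)) with hW_def
  set U : Set (WeakDual 𝕜 X) := {φ | ∀ v ∈ W, ‖φ v - f v‖ < η} with hU_def
  have hUopen : IsOpen U := by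
    have : U = ⋂ v ∈ W, (fun φ : WeakDual 𝕜 X => φ v) ⁻¹' (Metric.ball (f v) η) := by
      ext φ
      simp [hU_def, Metric.mem_ball, dist_eq_norm]
    rw [this]
    exact isOpen_biInter_finset fun v _ =>
      (WeakDual.eval_continuous v).isOpen_preimage _ Metric.isOpen_ball
  have hUmem : StrongDual.toWeakDual f ∈ U := by
    intro v _
    simpa using hη
  have hfcl : StrongDual.toWeakDual f ∈
      closure (⇑StrongDual.toWeakDual '' convexHull ℝ B) := by
    rw [hBhull]
    exact ⟨f, by simp [Metric.mem_closedBall, dist_zero_right, hf], rfl⟩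
  obtain ⟨φ, hφU, g, hghull, hφg⟩ := (_root_.mem_closure_iff.1 hfcl) U hUopen hUmem
  have hgW : ∀ v ∈ W, ‖g v - f v‖ < η := by
    intro v hv
    have h0 := hφU v hv
    rw [← hφg] at h0
    exact h0
  rw [convexHull_eq] at hghull
  obtain ⟨κ, t, μ, b, hμ0, hμ1, hbB, hgc⟩ := hghull
  have hgsum : g = ∑ j ∈ t, μ j • b j := by
    rw [← hgc, Finset.centerMass_eq_of_sum_1 _ _ hμ1]
  have hgapply : ∀ v : X, g v = ∑ j ∈ t, (μ j : 𝕜) * (b j v) := by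
    intro v
    rw [hgsum]
    rw [ContinuousLinearMap.sum_apply]
    exact Finset.sum_congr rfl fun j _ => hsmulD _ _ _
  -- weights on the product
  have hω1 : ∑ p ∈ s ×ˢ t, w p.1 * μ p.2 = 1 := by
    rw [Finset.sum_product]
    calc ∑ i ∈ s, ∑ j ∈ t, w i * μ j = ∑ i ∈ s, w i * ∑ j ∈ t, μ j :=
          Finset.sum_congr rfl fun i _ => (Finset.mul_sum _ _ _).symm
    _ = 1 := by
        rw [hμ1]
        simpa using hw1
  have hω0 : ∀ p ∈ s ×ˢ t, 0 ≤ w p.1 * μ p.2 := by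
    rintro ⟨i, j⟩ hp
    rw [Finset.mem_product] at hp
    exact mul_nonneg (hw0 i hp.1) (hμ0 j hp.2)
  -- expansion of g applied to convex combinations
  have hexp : ∀ v : ι → X, g (∑ i ∈ s, w i • v i) =
      ∑ p ∈ s ×ˢ t, ((w p.1 * μ p.2 : ℝ) : 𝕜) * b p.2 (v p.1) := by
    intro v
    rw [map_sum, Finset.sum_product]
    refine Finset.sum_congr rfl fun i _ => ?_
    rw [hsmulX, map_smul, hgapply, smul_eq_mul, Finset.mul_sum]
    refine Finset.sum_congr rfl fun j _ => ?_
    push_cast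
    ring
  have hre_ba : ∀ p ∈ s ×ˢ t, re (b p.2 (a p.1)) ≤ 1 := by
    rintro ⟨i, j⟩ hp
    rw [Finset.mem_product] at hp
    calc re (b j (a i)) ≤ ‖b j (a i)‖ := re_le_norm _
    _ ≤ ‖b j‖ * ‖a i‖ := (b j).le_opNorm _
    _ ≤ 1 := mul_le_one₀ (by
        simpa [Metric.mem_closedBall, dist_zero_right] using hB (hbB j hp.2))
        (norm_nonneg _) (ha1 i hp.1)
  -- re (g z) is close to 1
  have hfz : ‖f z - 1‖ ≤ η := by
    rw [← hfx]
    calc ‖f z - f x‖ = ‖f (z - x)‖ := by rw [map_sub]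
    _ ≤ ‖f‖ * ‖z - x‖ := f.le_opNorm _
    _ ≤ 1 * η := by
        rw [hf, norm_sub_rev]
        gcongr
    _ = η := one_mul η
  have hrefz : 1 - η ≤ re (f z) := by
    have h1 : |re (f z - 1)| ≤ η := le_trans (abs_re_le_norm _) hfz
    rw [map_sub, one_re, abs_le] at h1
    linarith [h1.1]
  have hdiffsum : ∀ v : ι → X,
      g (∑ i ∈ s, w i • v i) - f (∑ i ∈ s, w i • v i)
        = ∑ i ∈ s, (w i : 𝕜) * (g (v i) - f (v i)) := by
    intro v
    rw [map_sum, map_sum, ← Finset.sum_sub_distrib]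
    refine Finset.sum_congr rfl fun i hi => ?_
    rw [hsmulX, map_smul, map_smul, smul_eq_mul, smul_eq_mul, mul_sub]
  have hcomb_est : ∀ v : ι → X, (∀ i ∈ s, v i ∈ W) →
      ‖g (∑ i ∈ s, w i • v i) - f (∑ i ∈ s, w i • v i)‖ ≤ η := by
    intro v hv
    rw [hdiffsum v]
    calc ‖∑ i ∈ s, (w i : 𝕜) * (g (v i) - f (v i))‖
        ≤ ∑ i ∈ s, ‖(w i : 𝕜) * (g (v i) - f (v i))‖ := norm_sum_le _ _
    _ ≤ ∑ i ∈ s, w i * η := by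
        refine Finset.sum_le_sum fun i hi => ?_
        rw [norm_mul, norm_ofReal, abs_of_nonneg (hw0 i hi)]
        exact mul_le_mul_of_nonneg_left (hgW _ (hv i hi)).le (hw0 i hi)
    _ = η := by rw [← Finset.sum_mul, hw1, one_mul]
  have hgzfz : ‖g z - f z‖ ≤ η := by
    rw [hzsum]
    exact hcomb_est a fun i hi => Finset.mem_union_left _ (Finset.mem_image_of_mem a hi)
  have hregz : 1 - 2 * η ≤ re (g z) := by
    have h1 : |re (g z - f z)| ≤ η := le_trans (abs_re_le_norm _) hgzfz
    rw [map_sub, abs_le] at h1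
    linarith [h1.1]
  -- Markov inequality on the bad set
  set Pb := (s ×ˢ t).filter (fun p => re (b p.2 (a p.1)) ≤ 1 - δ) with hPb_def
  have hregz_sum : re (g z) = ∑ p ∈ s ×ˢ t, (w p.1 * μ p.2) * re (b p.2 (a p.1)) := by
    rw [show g z = ∑ p ∈ s ×ˢ t, ((w p.1 * μ p.2 : ℝ) : 𝕜) * b p.2 (a p.1) from by
      rw [hzsum]; exact hexp a]
    rw [map_sum]
    exact Finset.sum_congr rfl fun p _ => re_ofReal_mul _ _
  have hbad : ∑ p ∈ Pb, w p.1 * μ p.2 ≤ 2 * η / δ := by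
    have hterm : ∀ p ∈ s ×ˢ t, 0 ≤ (w p.1 * μ p.2) * (1 - re (b p.2 (a p.1))) :=
      fun p hp => mul_nonneg (hω0 p hp) (by linarith [hre_ba p hp])
    have htot : ∑ p ∈ s ×ˢ t, (w p.1 * μ p.2) * (1 - re (b p.2 (a p.1))) ≤ 2 * η := by
      have heq : ∑ p ∈ s ×ˢ t, (w p.1 * μ p.2) * (1 - re (b p.2 (a p.1)))
          = 1 - re (g z) := by
        rw [hregz_sum]
        simp only [show ∀ p : ι × κ, (w p.1 * μ p.2) * (1 - re (b p.2 (a p.1)))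
          = w p.1 * μ p.2 - (w p.1 * μ p.2) * re (b p.2 (a p.1)) from fun p => by ring]
        rw [Finset.sum_sub_distrib, hω1]
      rw [heq]
      linarith
    have hsub : ∑ p ∈ Pb, (w p.1 * μ p.2) * δ
        ≤ ∑ p ∈ Pb, (w p.1 * μ p.2) * (1 - re (b p.2 (a p.1))) := by
      refine Finset.sum_le_sum fun p hp => ?_
      rw [hPb_def, Finset.mem_filter] at hp
      exact mul_le_mul_of_nonneg_left (by linarith [hp.2]) (hω0 p hp.1)
    have hsub2 : ∑ p ∈ Pb, (w p.1 * μ p.2) * (1 - re (b p.2 (a p.1)))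
        ≤ ∑ p ∈ s ×ˢ t, (w p.1 * μ p.2) * (1 - re (b p.2 (a p.1))) :=
      Finset.sum_le_sum_of_subset_of_nonneg (Finset.filter_subset _ _)
        (fun p hp _ => hterm p hp)
    rw [← Finset.sum_mul] at hsub
    rw [le_div_iff₀ hδ]
    linarith
  -- bound on the operator norm pieces
  have hbT : ∀ p ∈ s ×ˢ t, ‖b p.2 (T (a p.1))‖ ≤ ‖T‖ := by
    rintro ⟨i, j⟩ hp
    rw [Finset.mem_product] at hp
    calc ‖b j (T (a i))‖ ≤ ‖b j‖ * ‖T (a i)‖ := (b j).le_opNorm _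
    _ ≤ 1 * (‖T‖ * 1) := by
        gcongr
        · simpa [Metric.mem_closedBall, dist_zero_right] using hB (hbB j hp.2)
        · calc ‖T (a i)‖ ≤ ‖T‖ * ‖a i‖ := T.le_opNorm _
          _ ≤ ‖T‖ * 1 := by gcongr; exact ha1 i hp.1
    _ = ‖T‖ := by ring
  have hgood : ∀ p ∈ s ×ˢ t, ¬(re (b p.2 (a p.1)) ≤ 1 - δ) → ‖b p.2 (T (a p.1))‖ ≤ S := by
    rintro ⟨i, j⟩ hp hgt
    rw [Finset.mem_product] at hp
    exact le_csSup (numRadiusDeltaOn_bddAbove T A B hA hB δ)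
      ⟨a i, haA i hp.1, b j, hbB j hp.2, not_le.1 hgt, rfl⟩
  -- main estimate for g (T z)
  have hgTz : ‖g (T z)‖ ≤ S + 2 * η / δ * ‖T‖ := by
    have hTz : T z = ∑ i ∈ s, w i • T (a i) := by
      rw [hzsum, map_sum]
      exact Finset.sum_congr rfl fun i _ => by
        rw [hsmulX, map_smul, hsmulX]
    have hgTz_eq : g (T z) = ∑ p ∈ s ×ˢ t, ((w p.1 * μ p.2 : ℝ) : 𝕜) * b p.2 (T (a p.1)) := by
      rw [hTz]
      exact hexp _
    rw [hgTz_eq]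
    have h1 : ‖∑ p ∈ s ×ˢ t, ((w p.1 * μ p.2 : ℝ) : 𝕜) * b p.2 (T (a p.1))‖
        ≤ ∑ p ∈ s ×ˢ t, (w p.1 * μ p.2) * ‖b p.2 (T (a p.1))‖ := by
      refine (norm_sum_le _ _).trans (le_of_eq ?_)
      refine Finset.sum_congr rfl fun p hp => ?_
      rw [norm_mul, norm_ofReal, abs_of_nonneg (hω0 p hp)]
    have hsplit : ∑ p ∈ s ×ˢ t, (w p.1 * μ p.2) * ‖b p.2 (T (a p.1))‖
        = ∑ p ∈ Pb, (w p.1 * μ p.2) * ‖b p.2 (T (a p.1))‖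
          + ∑ p ∈ (s ×ˢ t).filter (fun p => ¬ re (b p.2 (a p.1)) ≤ 1 - δ),
              (w p.1 * μ p.2) * ‖b p.2 (T (a p.1))‖ :=
      (Finset.sum_filter_add_sum_filter_not _ _ _).symm
    have hbadpart : ∑ p ∈ Pb, (w p.1 * μ p.2) * ‖b p.2 (T (a p.1))‖
        ≤ 2 * η / δ * ‖T‖ := by
      calc ∑ p ∈ Pb, (w p.1 * μ p.2) * ‖b p.2 (T (a p.1))‖
          ≤ ∑ p ∈ Pb, (w p.1 * μ p.2) * ‖T‖ := by
            refine Finset.sum_le_sum fun p hp => ?_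
            have hp' := Finset.filter_subset _ _ hp
            exact mul_le_mul_of_nonneg_left (hbT p hp') (hω0 p hp')
      _ = (∑ p ∈ Pb, w p.1 * μ p.2) * ‖T‖ := (Finset.sum_mul _ _ _).symm
      _ ≤ 2 * η / δ * ‖T‖ := by gcongr
    have hgoodpart : ∑ p ∈ (s ×ˢ t).filter (fun p => ¬ re (b p.2 (a p.1)) ≤ 1 - δ),
        (w p.1 * μ p.2) * ‖b p.2 (T (a p.1))‖ ≤ S := by
      calc ∑ p ∈ (s ×ˢ t).filter (fun p => ¬ re (b p.2 (a p.1)) ≤ 1 - δ),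
            (w p.1 * μ p.2) * ‖b p.2 (T (a p.1))‖
          ≤ ∑ p ∈ (s ×ˢ t).filter (fun p => ¬ re (b p.2 (a p.1)) ≤ 1 - δ),
            (w p.1 * μ p.2) * S := by
            refine Finset.sum_le_sum fun p hp => ?_
            rw [Finset.mem_filter] at hp
            exact mul_le_mul_of_nonneg_left (hgood p hp.1 hp.2) (hω0 p hp.1)
      _ = (∑ p ∈ (s ×ˢ t).filter (fun p => ¬ re (b p.2 (a p.1)) ≤ 1 - δ),
            w p.1 * μ p.2) * S := (Finset.sum_mul _ _ _).symm
      _ ≤ 1 * S := by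
          gcongr
          rw [← hω1]
          exact Finset.sum_le_sum_of_subset_of_nonneg (Finset.filter_subset _ _)
            (fun p hp _ => hω0 p hp)
      _ = S := one_mul S
    linarith
  -- assemble
  have hfTzg : ‖f (T z) - g (T z)‖ ≤ η := by
    have hTz : T z = ∑ i ∈ s, w i • T (a i) := by
      rw [hzsum, map_sum]
      exact Finset.sum_congr rfl fun i _ => by
        rw [hsmulX, map_smul, hsmulX]
    rw [norm_sub_rev, hTz]
    exact hcomb_est (fun i => T (a i)) fun i hi =>
      Finset.mem_union_right _ (Finset.mem_image_of_mem _ hi)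
  have hfTx : ‖f (T x) - f (T z)‖ ≤ ‖T‖ * η := by
    calc ‖f (T x) - f (T z)‖ = ‖f (T (x - z))‖ := by rw [map_sub, map_sub]
    _ ≤ ‖f‖ * ‖T (x - z)‖ := f.le_opNorm _
    _ ≤ 1 * (‖T‖ * η) := by
        rw [hf]
        gcongr
        calc ‖T (x - z)‖ ≤ ‖T‖ * ‖x - z‖ := T.le_opNorm _
        _ ≤ ‖T‖ * η := by gcongr
    _ = ‖T‖ * η := one_mul _
  calc ‖f (T x)‖ ≤ ‖f (T x) - f (T z)‖ + ‖f (T z) - g (T z)‖ + ‖g (T z)‖ := by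
        have := norm_add₃_le (a := f (T x) - f (T z)) (b := f (T z) - g (T z)) (c := g (T z))
        simpa using this
  _ ≤ ‖T‖ * η + η + (S + 2 * η / δ * ‖T‖) := by gcongr
  _ ≤ S + ε := by
        have hring : 2 * η / δ * ‖T‖ = η * (2 * ‖T‖ / δ) := by ring
        linarith [hηε]

end LemA

/-- If `A ⊆ B_X` has closed convex hull `B_X` and `B ⊆ B_{X*}` has weak*
closed convex hull `B_{X*}`, then `v(T) = inf_{δ>0} sup{ |x*(Tx)| : x ∈ A, x* ∈ B,
Re x*(x) > 1 - δ }`. -/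
theorem numRadius_eq_sInf_numRadiusDeltaOn {𝕜 X : Type*} [RCLike 𝕜] [NormedAddCommGroup X]
    [NormedSpace 𝕜 X] [CompleteSpace X] [NormedSpace ℝ X] [IsScalarTower ℝ 𝕜 X]
    [NormedSpace ℝ (X →L[𝕜] 𝕜)] [IsScalarTower ℝ 𝕜 (X →L[𝕜] 𝕜)]
    (T : X →L[𝕜] X) (A : Set X) (B : Set (X →L[𝕜] 𝕜))
    (hA : A ⊆ closedBall 0 1) (hAhull : closure (convexHull ℝ A) = closedBall 0 1)
    (hB : B ⊆ closedBall 0 1)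
    (hBhull : closure (⇑StrongDual.toWeakDual '' convexHull ℝ B) =
      ⇑StrongDual.toWeakDual '' closedBall 0 1) :
    numRadius 𝕜 T = sInf {r : ℝ | ∃ δ : ℝ, 0 < δ ∧ r = numRadiusDeltaOn 𝕜 T A B δ} := by
  have hSne : {r : ℝ | ∃ δ : ℝ, 0 < δ ∧ r = numRadiusDeltaOn 𝕜 T A B δ}.Nonempty :=
    ⟨numRadiusDeltaOn 𝕜 T A B 1, 1, one_pos, rfl⟩
  have hSbd : BddBelow {r : ℝ | ∃ δ : ℝ, 0 < δ ∧ r = numRadiusDeltaOn 𝕜 T A B δ} :=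
    ⟨0, by rintro r ⟨δ, hδ, rfl⟩; exact numRadiusDeltaOn_nonneg T A B δ⟩
  apply le_antisymm
  · apply le_csInf hSne
    rintro r ⟨δ, hδ, rfl⟩
    apply Real.sSup_le
    · rintro r' ⟨x, f, hx, hf, hfx, rfl⟩
      exact lemA T A B hA hAhull hB hBhull x f hx hf hfx δ hδ
    · exact numRadiusDeltaOn_nonneg T A B δ
  · apply le_of_forall_pos_le_add
    intro ε hε
    set δ : ℝ := min (1/8) ((ε / (5 * ‖T‖ + 1))^2) with hδdef
    have hTpos : (0:ℝ) < 5 * ‖T‖ + 1 := by positivity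
    have hδpos : 0 < δ := lt_min (by norm_num) (by positivity)
    have hδ4 : δ < 1/4 := lt_of_le_of_lt (min_le_left _ _) (by norm_num)
    have hkey : 5 * Real.sqrt δ * ‖T‖ ≤ ε := by
      have h1 : Real.sqrt δ ≤ ε / (5 * ‖T‖ + 1) := by
        calc Real.sqrt δ ≤ Real.sqrt ((ε / (5 * ‖T‖ + 1))^2) :=
              Real.sqrt_le_sqrt (min_le_right _ _)
        _ = ε / (5 * ‖T‖ + 1) := Real.sqrt_sq (by positivity)
      calc 5 * Real.sqrt δ * ‖T‖ ≤ 5 * (ε / (5 * ‖T‖ + 1)) * ‖T‖ := by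
            gcongr
      _ = ε * (5 * ‖T‖ / (5 * ‖T‖ + 1)) := by ring
      _ ≤ ε * 1 := by
            gcongr
            rw [div_le_one hTpos]
            linarith
      _ = ε := mul_one ε
    calc sInf {r : ℝ | ∃ δ : ℝ, 0 < δ ∧ r = numRadiusDeltaOn 𝕜 T A B δ}
        ≤ numRadiusDeltaOn 𝕜 T A B δ := csInf_le hSbd ⟨δ, hδpos, rfl⟩
    _ ≤ numRadius 𝕜 T + 5 * Real.sqrt δ * ‖T‖ := lemB T A B hA hB δ hδpos hδ4
    _ ≤ numRadius 𝕜 T + ε := by linarith
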